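/- For all real x with 0 < |x| < π/2, (x / sin x)^2 + x/(tan x) > 2. -/

import Mathlib

open Real

private lemma hasDeriv_g (y : ℝ) :
    HasDerivAt (fun y => 2*y + y*(cos y^2 - sin y^2) - 3*(sin y*cos y))
      (4*sin y*(sin y - y*cos y)) y := by
  have hs := Real.hasDerivAt_sin y
  have hc := Real.hasDerivAt_cos y
  have h1 := (((hasDerivAt_id y).const_mul 2).add
      ((hasDerivAt_id y).mul (((hc.pow 2).sub (hs.pow 2))))).sub
      ((hs.mul hc).const_mul 3)
  simp only [id_eq] at h1
  refine h1.congr_deriv ?_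
  simp only [Pi.sub_apply, Pi.pow_apply]
  have hpy : sin y ^ 2 + cos y ^ 2 = 1 := Real.sin_sq_add_cos_sq y
  ring_nf
  nlinarith [hpy]

private lemma hasDeriv_f (y : ℝ) :
    HasDerivAt (fun y => y^2 + y*(sin y*cos y) - 2*sin y^2)
      (2*y + y*(cos y^2 - sin y^2) - 3*(sin y*cos y)) y := by
  have hs := Real.hasDerivAt_sin y
  have hc := Real.hasDerivAt_cos y
  have h1 := (((hasDerivAt_id y).pow 2).add ((hasDerivAt_id y).mul (hs.mul hc))).sub
      ((hs.pow 2).const_mul 2)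
  simp only [id_eq] at h1
  refine h1.congr_deriv ?_
  simp only [Pi.mul_apply]
  ring

private lemma key (x : ℝ) (hx : 0 < x) (hx2 : x < π/2) :
    2*sin x^2 < x^2 + x*(sin x*cos x) := by
  set g : ℝ → ℝ := fun y => 2*y + y*(cos y^2 - sin y^2) - 3*(sin y*cos y) with hgdef
  set f : ℝ → ℝ := fun y => y^2 + y*(sin y*cos y) - 2*sin y^2 with hfdef
  have hgpos : ∀ y ∈ Set.Ioo 0 (π/2), 0 < g y := by
    intro y hy
    have hmono : StrictMonoOn g (Set.Icc 0 (π/2)) := by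
      apply strictMonoOn_of_deriv_pos (convex_Icc _ _)
        (fun y _ => (hasDeriv_g y).continuousAt.continuousWithinAt)
      intro z hz
      rw [interior_Icc] at hz
      rw [(hasDeriv_g z).deriv]
      have hsz : 0 < sin z := Real.sin_pos_of_pos_of_lt_pi hz.1 (by linarith [hz.2, Real.pi_pos])
      have hcz : 0 < cos z := Real.cos_pos_of_mem_Ioo ⟨by linarith [hz.1], hz.2⟩
      have htz : z < Real.tan z := Real.lt_tan hz.1 hz.2
      rw [Real.tan_eq_sin_div_cos, lt_div_iff₀ hcz] at htz
      have h4 : 0 < sin z - z*cos z := by linarith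
      positivity
    have h0 : g 0 = 0 := by simp [hgdef]
    have := hmono (Set.mem_Icc.2 ⟨le_refl 0, by positivity⟩)
      (Set.mem_Icc.2 ⟨hy.1.le, hy.2.le⟩) hy.1
    linarith [this, h0.symm ▸ this]
  have hmono : StrictMonoOn f (Set.Icc 0 (π/2)) := by
    apply strictMonoOn_of_deriv_pos (convex_Icc _ _)
      (fun y _ => (hasDeriv_f y).continuousAt.continuousWithinAt)
    intro z hz
    rw [interior_Icc] at hz
    rw [(hasDeriv_f z).deriv]
    exact hgpos z hz
  have h0 : f 0 = 0 := by simp [hfdef]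
  have := hmono (Set.mem_Icc.2 ⟨le_refl 0, by positivity⟩)
    (Set.mem_Icc.2 ⟨hx.le, hx2.le⟩) hx
  rw [h0] at this
  simp only [hfdef] at this
  linarith

private lemma main_pos (x : ℝ) (hx : 0 < x) (hx2 : x < π/2) :
    (x / sin x) ^ 2 + x / tan x > 2 := by
  have hs : 0 < sin x := Real.sin_pos_of_pos_of_lt_pi hx (by linarith [hx2, Real.pi_pos])
  have hc : 0 < cos x := Real.cos_pos_of_mem_Ioo ⟨by linarith, hx2⟩
  have hk := key x hx hx2
  rw [Real.tan_eq_sin_div_cos, div_div_eq_mul_div, div_pow, gt_iff_lt,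
    div_add_div _ _ (by positivity) hs.ne', lt_div_iff₀ (by positivity)]
  nlinarith [sq_nonneg (sin x), hk, hs, hc]

theorem stmt_3 (x : ℝ) (h1 : 0 < |x|) (h2 : |x| < π / 2) :
    (x / sin x) ^ 2 + x / tan x > 2 := by
  rcases abs_pos.mp h1 |>.lt_or_gt with hneg | hpos
  · have h2' : -x < π/2 := by rw [abs_of_neg hneg] at h2; linarith
    have := main_pos (-x) (by linarith) h2'
    simpa [Real.sin_neg, Real.tan_neg, neg_div_neg_eq] using this
  · exact main_pos x hpos (by rwa [abs_of_pos hpos] at h2)
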